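/- Let (L, F, τ) be a probabilistic n-normed space with τ continuous, where L has finite dimension d (2 ≤ d < ∞) and fixed basis {u₁,…,u_d}. Then a sequence (x_m) in L converges to x ∈ L (i.e. F_{x_m−x,y₂,…,yₙ} → H₀ weakly for all y₂,…,yₙ ∈ L) if and only if lim_{m→∞} F_{x_m−x,y₂,…,y_{n−1},u_i} = H₀ (weakly, i.e. F_{x_m−x,y₂,…,y_{n−1},u_i}(t) → 1 for every t > 0) for every y₂,…,y_{n−1} ∈ L and every i = 1,…,d. -/

import Mathlib

open Filter Topology

noncomputable section

/-- The maximal distribution function `H₀`: `0` for `t ≤ 0` and `1` for `t > 0`. -/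
def H0 : ℝ → ℝ := fun t => if 0 < t then 1 else 0

/-- A distribution function in `Δ⁺`: nondecreasing, with values in `[0,1]` and `F 0 = 0`. -/
def IsDistFun (F : ℝ → ℝ) : Prop :=
  Monotone F ∧ (∀ t, 0 ≤ F t) ∧ (∀ t, F t ≤ 1) ∧ F 0 = 0

/-- Weak convergence of a sequence of distribution functions:
pointwise convergence at every continuity point of the limit. -/
def WeakTendsto (Fk : ℕ → ℝ → ℝ) (F : ℝ → ℝ) : Prop :=
  ∀ t : ℝ, ContinuousAt F t → Tendsto (fun k => Fk k t) atTop (𝓝 (F t))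

/-- A triangle function on `Δ⁺`: associative, commutative, nondecreasing in each
argument, with `H₀` as unit. -/
def IsTriangleFun (τ : (ℝ → ℝ) → (ℝ → ℝ) → (ℝ → ℝ)) : Prop :=
  (∀ F G, IsDistFun F → IsDistFun G → IsDistFun (τ F G)) ∧
  (∀ F G H, IsDistFun F → IsDistFun G → IsDistFun H →
    τ (τ F G) H = τ F (τ G H)) ∧
  (∀ F G, IsDistFun F → IsDistFun G → τ F G = τ G F) ∧
  (∀ F G H, IsDistFun F → IsDistFun G → IsDistFun H →
    (∀ t, F t ≤ G t) → ∀ t, τ F H t ≤ τ G H t) ∧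
  (∀ F, IsDistFun F → τ F H0 = F)

/-- Continuity of a triangle function with respect to weak convergence on `Δ⁺`. -/
def ContinuousTriangleFun (τ : (ℝ → ℝ) → (ℝ → ℝ) → (ℝ → ℝ)) : Prop :=
  ∀ (Fk Gk : ℕ → ℝ → ℝ) (F G : ℝ → ℝ),
    (∀ m, IsDistFun (Fk m)) → (∀ m, IsDistFun (Gk m)) →
    IsDistFun F → IsDistFun G →
    WeakTendsto Fk F → WeakTendsto Gk G →
    WeakTendsto (fun m => τ (Fk m) (Gk m)) (τ F G)

/-- A probabilistic `n`-norm, for `n = k + 2`, on a real vector space `L`: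
a map `F : Lⁿ → Δ⁺` satisfying (Pn-N1)–(Pn-N5). -/
def IsProbNNorm {L : Type*} [AddCommGroup L] [Module ℝ L] (k : ℕ)
    (F : (Fin (k + 2) → L) → ℝ → ℝ)
    (τ : (ℝ → ℝ) → (ℝ → ℝ) → (ℝ → ℝ)) : Prop :=
  (∀ xs, IsDistFun (F xs)) ∧
  -- (Pn-N1)
  (∀ xs : Fin (k + 2) → L, ¬ LinearIndependent ℝ xs → F xs = H0) ∧
  -- (Pn-N2)
  (∀ xs : Fin (k + 2) → L, LinearIndependent ℝ xs → F xs ≠ H0) ∧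
  -- (Pn-N3)
  (∀ (xs : Fin (k + 2) → L) (σ : Equiv.Perm (Fin (k + 2))), F (xs ∘ σ) = F xs) ∧
  -- (Pn-N4)
  (∀ (α : ℝ) (x : L) (ys : Fin (k + 1) → L) (t : ℝ), α ≠ 0 → 0 < t →
    F (Fin.cons (α • x) ys) t = F (Fin.cons x ys) (t / |α|)) ∧
  -- (Pn-N5)
  (∀ (x y : L) (ys : Fin (k + 1) → L) (t : ℝ),
    τ (F (Fin.cons x ys)) (F (Fin.cons y ys)) t ≤ F (Fin.cons (x + y) ys) t)

/-- Convergence of a sequence in a probabilistic `n`-normed space: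
`F_{x_m − x, y₂, …, yₙ} → H₀` weakly, i.e. the value at every `t > 0` tends to `1`. -/
def PConvergesTo {L : Type*} [AddCommGroup L] [Module ℝ L] (k : ℕ)
    (F : (Fin (k + 2) → L) → ℝ → ℝ) (xm : ℕ → L) (x : L) : Prop :=
  ∀ (ys : Fin (k + 1) → L) (t : ℝ), 0 < t →
    Tendsto (fun m => F (Fin.cons (xm m - x) ys) t) atTop (𝓝 1)

/-- The derived norm `F^∞` with respect to the basis `u`: the pointwise supremum
of `F_{x, y₂, …, y_{n−1}, u_i}` over all `y₂, …, y_{n−1} ∈ L` and `i = 1, …, d`. -/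
def derivedNorm {L : Type*} [AddCommGroup L] [Module ℝ L] (k d : ℕ)
    (F : (Fin (k + 2) → L) → ℝ → ℝ) (u : Module.Basis (Fin d) ℝ L) (x : L) : ℝ → ℝ :=
  fun t => ⨆ (ys : Fin k → L) (i : Fin d), F (Fin.cons x (Fin.snoc ys (u i))) t

lemma H0_distfun : IsDistFun H0 := by
  refine ⟨?_, ?_, ?_, ?_⟩
  · intro a b hab
    unfold H0
    split_ifs with h1 h2 <;> norm_num <;> linarith
  · intro t; unfold H0; split_ifs <;> norm_num
  · intro t; unfold H0; split_ifs <;> norm_num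
  · simp [H0]

lemma swap_cons_snoc {L : Type*} (k : ℕ) (z w : L) (ys : Fin k → L) :
    (Fin.cons z (Fin.snoc ys w) : Fin (k+2) → L) ∘ (Equiv.swap 0 (Fin.last (k+1)))
      = Fin.cons w (Fin.snoc ys z) := by
  funext j
  rcases eq_or_ne j 0 with rfl | h0
  · rw [Function.comp_apply, Equiv.swap_apply_left, ← Fin.succ_last, Fin.cons_succ,
      Fin.snoc_last, Fin.cons_zero]
  rcases eq_or_ne j (Fin.last (k+1)) with rfl | hl
  · rw [Function.comp_apply, Equiv.swap_apply_right, Fin.cons_zero, ← Fin.succ_last,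
      Fin.cons_succ, Fin.snoc_last]
  · rw [Function.comp_apply, Equiv.swap_apply_of_ne_of_ne h0 hl]
    obtain ⟨i, rfl⟩ := Fin.exists_succ_eq.mpr h0
    have hi : i ≠ Fin.last k := by
      intro h; apply hl; rw [h, Fin.succ_last]
    obtain ⟨m, rfl⟩ := Fin.exists_castSucc_eq.mpr hi
    rw [Fin.cons_succ, Fin.cons_succ, Fin.snoc_castSucc, Fin.snoc_castSucc]

lemma H0_continuousAt_pos {s : ℝ} (hs : 0 < s) : ContinuousAt H0 s := by
  have h : H0 =ᶠ[𝓝 s] fun _ => (1 : ℝ) :=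
    Filter.eventually_of_mem (Ioi_mem_nhds hs) fun y hy => if_pos hy
  exact continuousAt_const.congr h.symm

/-- **Lemma 1.** In a finite-dimensional probabilistic `n`-normed space with
continuous `τ` and fixed basis `u₁, …, u_d`, a sequence `(x_m)` converges to `x`
iff `F_{x_m − x, y₂, …, y_{n−1}, u_i} → H₀` for all `y₂, …, y_{n−1} ∈ L` and all `i`. -/
theorem stmt0 {L : Type*} [AddCommGroup L] [Module ℝ L] (k d : ℕ)
    (hd : 2 ≤ d) (hdn : k + 2 ≤ d) (u : Module.Basis (Fin d) ℝ L)
    (τ : (ℝ → ℝ) → (ℝ → ℝ) → (ℝ → ℝ))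
    (hτ : IsTriangleFun τ) (hτc : ContinuousTriangleFun τ)
    (F : (Fin (k + 2) → L) → ℝ → ℝ) (hF : IsProbNNorm k F τ)
    (xm : ℕ → L) (x : L) :
    PConvergesTo k F xm x ↔
      ∀ (ys : Fin k → L) (i : Fin d) (t : ℝ), 0 < t →
        Tendsto (fun m => F (Fin.cons (xm m - x) (Fin.snoc ys (u i))) t)
          atTop (𝓝 1) := by
  constructor
  · intro h ys i t ht
    exact h (Fin.snoc ys (u i)) t ht
  · intro h ys t ht
    obtain ⟨hdist, hdep, hindep, hperm, hscale, htri⟩ := hF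
    set z : ℕ → L := fun m => xm m - x with hz
    have Fswap : ∀ (a b : L) (ys' : Fin k → L),
        F (Fin.cons a (Fin.snoc ys' b)) = F (Fin.cons b (Fin.snoc ys' a)) := by
      intro a b ys'
      rw [← hperm (Fin.cons a (Fin.snoc ys' b)) (Equiv.swap 0 (Fin.last (k+1))),
        swap_cons_snoc]
    set ys' : Fin k → L := Fin.init ys with hys'
    set Q : L → Prop := fun v => ∀ s : ℝ, 0 < s →
      Tendsto (fun m => F (Fin.cons (z m) (Fin.snoc ys' v)) s) atTop (𝓝 1) with hQ
    -- Q 0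
    have hQ0 : Q 0 := by
      intro s hs
      have hdep0 : ∀ m, F (Fin.cons (z m) (Fin.snoc ys' (0 : L))) = H0 := by
        intro m
        apply hdep
        intro hli
        apply hli.ne_zero (Fin.last (k+1))
        rw [← Fin.succ_last, Fin.cons_succ, Fin.snoc_last]
      have : ∀ m, F (Fin.cons (z m) (Fin.snoc ys' (0 : L))) s = 1 := by
        intro m; rw [hdep0 m]; exact if_pos hs
      simp only [this]
      exact tendsto_const_nhds
    -- Q (c • u i)
    have hQsmul : ∀ (c : ℝ) (i : Fin d), Q (c • u i) := by
      intro c i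
      rcases eq_or_ne c 0 with rfl | hc
      · rw [zero_smul]; exact hQ0
      · intro s hs
        have key : ∀ m, F (Fin.cons (z m) (Fin.snoc ys' (c • u i))) s
            = F (Fin.cons (z m) (Fin.snoc ys' (u i))) (s / |c|) := by
          intro m
          rw [Fswap, hscale c (u i) (Fin.snoc ys' (z m)) s hc hs, Fswap]
        simp only [key]
        exact h ys' i (s / |c|) (div_pos hs (abs_pos.mpr hc))
    -- Q closed under addition
    have hQadd : ∀ a b : L, Q a → Q b → Q (a + b) := by
      intro a b ha hb s hs
      set Fk : ℕ → ℝ → ℝ := fun m => F (Fin.cons (z m) (Fin.snoc ys' a)) with hFk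
      set Gk : ℕ → ℝ → ℝ := fun m => F (Fin.cons (z m) (Fin.snoc ys' b)) with hGk
      have weak : ∀ (Hk : ℕ → ℝ → ℝ), (∀ m, IsDistFun (Hk m)) →
          (∀ s : ℝ, 0 < s → Tendsto (fun m => Hk m s) atTop (𝓝 1)) →
          WeakTendsto Hk H0 := by
        intro Hk hHd hHlim r hcont
        rcases lt_trichotomy r 0 with hr | hr | hr
        · have hzero : ∀ m, Hk m r = 0 := by
            intro m
            have h1 : Hk m r ≤ Hk m 0 := (hHd m).1 hr.le
            have h2 : 0 ≤ Hk m r := (hHd m).2.1 r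
            rw [(hHd m).2.2.2] at h1
            linarith
          have hH0r : H0 r = 0 := if_neg (by linarith)
          rw [hH0r]
          simp only [hzero]
          exact tendsto_const_nhds
        · exfalso
          subst hr
          have h2 : Tendsto H0 (𝓝 0) (𝓝 0) := by
            have := hcont.tendsto
            rwa [show H0 0 = 0 from by simp [H0]] at this
          have h3 : Tendsto H0 (𝓝[>] (0:ℝ)) (𝓝 0) := h2.mono_left nhdsWithin_le_nhds
          have h4 : Tendsto (fun _ : ℝ => (1:ℝ)) (𝓝[>] (0:ℝ)) (𝓝 0) := by
            apply h3.congr'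
            filter_upwards [self_mem_nhdsWithin] with y hy
            exact if_pos hy
          have := tendsto_nhds_unique h4 tendsto_const_nhds
          norm_num at this
        · have hH0r : H0 r = 1 := if_pos hr
          rw [hH0r]
          exact hHlim r hr
      have hFkd : ∀ m, IsDistFun (Fk m) := fun m => hdist _
      have hGkd : ∀ m, IsDistFun (Gk m) := fun m => hdist _
      have wF : WeakTendsto Fk H0 := weak Fk hFkd ha
      have wG : WeakTendsto Gk H0 := weak Gk hGkd hb
      have wτ : WeakTendsto (fun m => τ (Fk m) (Gk m)) (τ H0 H0) :=
        hτc Fk Gk H0 H0 hFkd hGkd H0_distfun H0_distfun wF wG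
      have hτH0 : τ H0 H0 = H0 := hτ.2.2.2.2 H0 H0_distfun
      have τlim : Tendsto (fun m => τ (Fk m) (Gk m) s) atTop (𝓝 1) := by
        have := wτ s (by rw [hτH0]; exact H0_continuousAt_pos hs)
        rwa [hτH0, show H0 s = 1 from if_pos hs] at this
      have lower : ∀ m, τ (Fk m) (Gk m) s ≤ F (Fin.cons (z m) (Fin.snoc ys' (a+b))) s := by
        intro m
        have h1 := htri a b (Fin.snoc ys' (z m)) s
        rw [← Fswap (z m) a, ← Fswap (z m) b, ← Fswap (z m) (a+b)] at h1
        exact h1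
      have upper : ∀ m, F (Fin.cons (z m) (Fin.snoc ys' (a+b))) s ≤ 1 :=
        fun m => (hdist _).2.2.1 s
      exact tendsto_of_tendsto_of_tendsto_of_le_of_le τlim tendsto_const_nhds lower upper
    -- conclude for the last entry of ys
    have hQlast : Q (ys (Fin.last k)) := by
      rw [← u.sum_repr (ys (Fin.last k))]
      exact Finset.sum_induction _ Q hQadd hQ0 (fun i _ => hQsmul _ i)
    have hys : Fin.snoc ys' (ys (Fin.last k)) = ys := Fin.snoc_init_self ys
    have := hQlast t ht
    rwa [hys] at this
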